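/- If W is a balanced tetrahedral erasure channel with 0 < H(W) < 1 and E(W) ≤ 2·H(W)·(1 − H(W)), then E(W^s) ≤ 2·H(W^s)·(1 − H(W^s)) and E(W^p) ≤ 2·H(W^p)·(1 − H(W^p)); that is, the condition Q(W) ≤ 2 is preserved by both children. -/
import Mathlib


noncomputable section

/-- A quintuple of reals representing a candidate tetrahedral erasure channel
`W = (p, q, r, s, t)`. -/
structure TECQuint where
  p : ℝ
  q : ℝ
  r : ℝ
  s : ℝ
  t : ℝ

namespace TECQuint

/-- `W` is a tetrahedral erasure channel: all five entries are nonnegative and sum to 1. -/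
def IsTEC (W : TECQuint) : Prop :=
  0 ≤ W.p ∧ 0 ≤ W.q ∧ 0 ≤ W.r ∧ 0 ≤ W.s ∧ 0 ≤ W.t ∧
    W.p + W.q + W.r + W.s + W.t = 1

/-- `W` is balanced: `q = r = s`. -/
def Balanced (W : TECQuint) : Prop := W.q = W.r ∧ W.r = W.s

/-- The serial child `W^s`. -/
def ser (W : TECQuint) : TECQuint where
  p := W.p ^ 2
  q := W.p * W.s + W.s * W.q + W.q * W.p
  r := W.p * W.q + W.q * W.r + W.r * W.p
  s := W.p * W.r + W.r * W.s + W.s * W.p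
  t := 1 - (W.p ^ 2 + (W.p * W.s + W.s * W.q + W.q * W.p)
      + (W.p * W.q + W.q * W.r + W.r * W.p)
      + (W.p * W.r + W.r * W.s + W.s * W.p))

/-- The parallel child `W^p`. -/
def par (W : TECQuint) : TECQuint where
  p := 1 - ((W.t * W.s + W.s * W.q + W.q * W.t)
      + (W.t * W.q + W.q * W.r + W.r * W.t)
      + (W.t * W.r + W.r * W.s + W.s * W.t) + W.t ^ 2)
  q := W.t * W.s + W.s * W.q + W.q * W.t
  r := W.t * W.q + W.q * W.r + W.r * W.t
  s := W.t * W.r + W.r * W.s + W.s * W.t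
  t := W.t ^ 2

/-- The moment of inertia `A(W) = (q−r)² + (r−s)² + (s−q)²`. -/
def inertia (W : TECQuint) : ℝ :=
  (W.q - W.r) ^ 2 + (W.r - W.s) ^ 2 + (W.s - W.q) ^ 2

/-- The (conditional) entropy `H(W) = (q+r+s)/2 + t`. -/
def entropy (W : TECQuint) : ℝ := (W.q + W.r + W.s) / 2 + W.t

/-- The edge mass `E(W) = q + r + s`. -/
def edgeMass (W : TECQuint) : ℝ := W.q + W.r + W.s

/-- The Quetelet index `Q(W) = E(W) / (H(W)(1−H(W)))`. -/
def quetelet (W : TECQuint) : ℝ :=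
  edgeMass W / (entropy W * (1 - entropy W))

/-- One step of the channel process: `true` picks the serial child, `false` the parallel child. -/
def child (W : TECQuint) (b : Bool) : TECQuint := if b then ser W else par W

/-- The descendant `W^c` of `W` along the string `c ∈ {s,p}^n`. -/
def descend : TECQuint → {n : ℕ} → (Fin n → Bool) → TECQuint
  | W, 0, _ => W
  | W, _ + 1, c => descend (child W (c 0)) (fun i => c i.succ)

end TECQuint

open TECQuint

theorem attraction_other_side (W : TECQuint) (hW : W.IsTEC) (hbal : W.Balanced)
    (h0 : 0 < entropy W) (h1 : entropy W < 1)
    (hQ : edgeMass W ≤ 2 * (entropy W * (1 - entropy W))) :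
    edgeMass (ser W) ≤ 2 * (entropy (ser W) * (1 - entropy (ser W))) ∧
      edgeMass (par W) ≤ 2 * (entropy (par W) * (1 - entropy (par W))) := by
  obtain ⟨hp, hq, hr, hs, ht, hsum⟩ := hW
  obtain ⟨hqr, hrs⟩ := hbal
  simp only [edgeMass, entropy, ser, par] at *
  rw [← hrs, ← hqr] at hQ ⊢
  have hpq : 0 ≤ W.p * W.q := mul_nonneg hp hq
  have htq : 0 ≤ W.t * W.q := mul_nonneg ht hq
  have hAs0 : 0 ≤ W.p ^ 2 + 3 * W.p * W.q + 3 * W.q ^ 2 / 2 := by positivity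
  have hAp0 : 0 ≤ W.t ^ 2 + 3 * W.t * W.q + 3 * W.q ^ 2 / 2 := by positivity
  have hAs : W.p ^ 2 + 3 * W.p * W.q + 3 * W.q ^ 2 / 2 ≤ W.p := by nlinarith [sq_nonneg W.q]
  have hAp : W.t ^ 2 + 3 * W.t * W.q + 3 * W.q ^ 2 / 2 ≤ W.t := by nlinarith [sq_nonneg W.q]
  have hs2 := mul_le_mul hAs hAs hAs0 hp
  have hp2 := mul_le_mul hAp hAp hAp0 ht
  constructor
  · nlinarith [hs2]
  · nlinarith [hp2]
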